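/- Assume that κ_n² and ξ_n² are real for every n = 1,…,N and that ε := −(κ_nξ_n)/(κ_n^*ξ_n^*) does not depend on n. Then for every nonzero λ ∈ ℂ the conjugate transposes of the monodromy entries satisfy A(λ)† = D(λ^*), B(λ)† = C(ελ^*), C(λ)† = B(ελ^*), D(λ)† = A(λ^*); in particular the transfer matrix T(λ) is self-adjoint for every nonzero real λ. -/

import Mathlib

open Matrix Complex Filter Topology

namespace SG

/-- Index set for the basis of `(ℂ^p)^{⊗N}`. -/
abbrev Idx (p N : ℕ) := Fin N → ZMod p

/-- Operators on `(ℂ^p)^{⊗N}`, realized as matrices. -/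
abbrev Op (p N : ℕ) := Matrix (Idx p N) (Idx p N) ℂ

/-- The square root of `q`: `q^{1/2} := q^{(p+1)/2}`. -/
noncomputable def qh (p : ℕ) (q : ℂ) : ℂ := q ^ ((p + 1) / 2)

/-- The operator `𝗎_n = u_n · (shift at site n)`, `𝗎_n|k⟩ = u_n |k-1⟩`. -/
noncomputable def uop (p N : ℕ) (u : Fin N → ℂ) (n : Fin N) : Op p N :=
  Matrix.of fun f g => if f = Function.update g n (g n - 1) then u n else 0

/-- The inverse of `𝗎_n`. -/
noncomputable def uopInv (p N : ℕ) (u : Fin N → ℂ) (n : Fin N) : Op p N :=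
  Matrix.of fun f g => if f = Function.update g n (g n + 1) then (u n)⁻¹ else 0

/-- The operator `𝗏_n = v_n · (clock at site n)`, `𝗏_n|k⟩ = v_n q^k |k⟩`. -/
noncomputable def vop (p N : ℕ) (q : ℂ) (v : Fin N → ℂ) (n : Fin N) : Op p N :=
  Matrix.diagonal fun g => v n * q ^ (g n).val

/-- The inverse of `𝗏_n`. -/
noncomputable def vopInv (p N : ℕ) (q : ℂ) (v : Fin N → ℂ) (n : Fin N) : Op p N :=
  Matrix.diagonal fun g => (v n * q ^ (g n).val)⁻¹

/-- The Lax matrix `L_n(λ)`. -/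
noncomputable def Lax (p N : ℕ) [NeZero p] (q : ℂ) (κ ξ u v : Fin N → ℂ) (n : Fin N)
    (lam : ℂ) : Matrix (Fin 2) (Fin 2) (Op p N) :=
  !![κ n • (uop p N u n *
        ((qh p q)⁻¹ • (κ n • vop p N q v n) + qh p q • ((κ n)⁻¹ • vopInv p N q v n))),
     (κ n / Complex.I) • ((lam / ξ n) • vop p N q v n - (lam / ξ n)⁻¹ • vopInv p N q v n);
     (κ n / Complex.I) • ((lam / ξ n) • vopInv p N q v n - (lam / ξ n)⁻¹ • vop p N q v n),
     κ n • (uopInv p N u n *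
        (qh p q • ((κ n)⁻¹ • vop p N q v n) + (qh p q)⁻¹ • (κ n • vopInv p N q v n)))]

/-- The monodromy matrix `M(λ) = L_N(λ) ⋯ L_1(λ)`. -/
noncomputable def Mon (p N : ℕ) [NeZero p] (q : ℂ) (κ ξ u v : Fin N → ℂ) (lam : ℂ) :
    Matrix (Fin 2) (Fin 2) (Op p N) :=
  (((List.finRange N).map fun n => Lax p N q κ ξ u v n lam).reverse).prod

/-- `A(λ)`, the (1,1) entry of the monodromy matrix. -/
noncomputable def Amat (p N : ℕ) [NeZero p] (q : ℂ) (κ ξ u v : Fin N → ℂ) (lam : ℂ) :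
    Op p N := Mon p N q κ ξ u v lam 0 0

/-- `B(λ)`, the (1,2) entry of the monodromy matrix. -/
noncomputable def Bmat (p N : ℕ) [NeZero p] (q : ℂ) (κ ξ u v : Fin N → ℂ) (lam : ℂ) :
    Op p N := Mon p N q κ ξ u v lam 0 1

/-- `C(λ)`, the (2,1) entry of the monodromy matrix. -/
noncomputable def Cmat (p N : ℕ) [NeZero p] (q : ℂ) (κ ξ u v : Fin N → ℂ) (lam : ℂ) :
    Op p N := Mon p N q κ ξ u v lam 1 0

/-- `D(λ)`, the (2,2) entry of the monodromy matrix. -/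
noncomputable def Dmat (p N : ℕ) [NeZero p] (q : ℂ) (κ ξ u v : Fin N → ℂ) (lam : ℂ) :
    Op p N := Mon p N q κ ξ u v lam 1 1

/-- The transfer matrix `T(λ) = A(λ) + D(λ)`. -/
noncomputable def Tmat (p N : ℕ) [NeZero p] (q : ℂ) (κ ξ u v : Fin N → ℂ) (lam : ℂ) :
    Op p N := Amat p N q κ ξ u v lam + Dmat p N q κ ξ u v lam

/-- The grading charge `Θ = ∏_{n=1}^N 𝗏_n^{(-1)^n}` (sites `n : Fin N` correspond to
the 1-indexed site `n+1`, whence the exponent `(-1)^{n+1}`); it is a diagonal operator. -/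
noncomputable def Theta (p N : ℕ) (q : ℂ) (v : Fin N → ℂ) : Op p N :=
  Matrix.diagonal fun g => ∏ n : Fin N, (v n * q ^ (g n).val) ^ ((-1 : ℤ) ^ ((n : ℕ) + 1))

/-- The inverse `Θ^{-1}` of the grading charge. -/
noncomputable def ThetaInv (p N : ℕ) (q : ℂ) (v : Fin N → ℂ) : Op p N :=
  Matrix.diagonal fun g => ∏ n : Fin N, (v n * q ^ (g n).val) ^ ((-1 : ℤ) ^ (n : ℕ))

/-- The average `𝒪(λ) = ∏_{k=1}^p O(q^k λ)` of a commuting family `O`. -/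
noncomputable def avg (p N : ℕ) [NeZero p] (q : ℂ) (O : ℂ → Op p N) (lam : ℂ) : Op p N :=
  ((List.range p).map fun k => O (q ^ (k + 1) * lam)).prod

/-! ### Auxiliary lemmas for statement 3 -/

lemma conj_eq_inv {z : ℂ} (h : ‖z‖ = 1) : (starRingEnd ℂ) z = z⁻¹ := by
  have h2 : z * (starRingEnd ℂ) z = 1 := by
    rw [Complex.mul_conj]; norm_cast
    rw [Complex.normSq_eq_norm_sq, h]; norm_num
  exact eq_inv_of_mul_eq_one_left (by rw [mul_comm] at h2; exact h2)

lemma star_eq_inv {z : ℂ} (h : ‖z‖ = 1) : star z = z⁻¹ := conj_eq_inv h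

lemma abs_ne_zero {z : ℂ} (h : ‖z‖ = 1) : z ≠ 0 := by
  intro hz; simp [hz] at h

lemma abs_eq_one_of_pow {z : ℂ} {k : ℕ} (hk : 0 < k) (h : z ^ k = 1) : ‖z‖ = 1 := by
  have h1 : ‖z‖ ^ k = 1 := by
    rw [← norm_pow, h]; simp
  rcases lt_trichotomy (‖z‖) 1 with hlt | heq | hgt
  · have h2 := pow_lt_one₀ (norm_nonneg z) hlt hk.ne'
    rw [h1] at h2; exact absurd h2 (lt_irrefl 1)
  · exact heq
  · have h2 := one_lt_pow₀ hgt hk.ne'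
    rw [h1] at h2; exact absurd h2 (lt_irrefl 1)

section helpers

variable {p N : ℕ} [NeZero p] {q : ℂ} {u v : Fin N → ℂ} {n m : Fin N}

section qpow
variable (hqp : q ^ p = 1) (hp1 : 1 < p) (hq0 : q ≠ 0)
  (hv : ∀ n, ‖v n‖ = 1) (hu : ∀ n, ‖u n‖ = 1)

include hqp in
lemma qpow_mod (x : ℕ) : q ^ (x % p) = q ^ x := by
  conv_rhs => rw [← Nat.mod_add_div x p]
  rw [pow_add, pow_mul, hqp, one_pow, mul_one]

include hqp in
lemma qpow_val_add (a b : ZMod p) : q ^ (a + b).val = q ^ a.val * q ^ b.val := by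
  rw [ZMod.val_add, qpow_mod hqp, pow_add]

include hqp hp1 in
lemma qpow_val_sub_one (k : ZMod p) : q ^ ((k - 1).val) * q = q ^ k.val := by
  have h : ((k - 1) + 1 : ZMod p) = k := by ring
  calc q ^ ((k - 1).val) * q = q ^ ((k-1).val) * q ^ ((1 : ZMod p)).val := by
        rw [ZMod.val_one_eq_one_mod, Nat.mod_eq_of_lt hp1]; ring
    _ = q ^ (((k-1) + 1 : ZMod p)).val := (qpow_val_add hqp _ _).symm
    _ = q ^ k.val := by rw [h]

include hqp hp1 in
lemma qpow_val_add_one (k : ZMod p) : q ^ ((k + 1).val) = q ^ k.val * q := by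
  rw [qpow_val_add hqp, ZMod.val_one_eq_one_mod, Nat.mod_eq_of_lt hp1, pow_one]

include hqp hp1 hq0 in
lemma vop_mul_uop : vop p N q v n * uop p N u n = q⁻¹ • (uop p N u n * vop p N q v n) := by
  ext f g
  simp only [vop, vopInv]
  rw [Matrix.smul_apply, Matrix.diagonal_mul, Matrix.mul_diagonal]
  simp only [uop, Matrix.of_apply]
  split_ifs with h
  · subst h
    rw [Function.update_self, smul_eq_mul]
    have h1 := qpow_val_sub_one hqp hp1 (q := q) (g n)
    field_simp
    linear_combination (v n * u n) * h1
  · simp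

include hqp hp1 hq0 in
lemma vop_mul_uopInv : vop p N q v n * uopInv p N u n = q • (uopInv p N u n * vop p N q v n) := by
  ext f g
  simp only [vop, vopInv]
  rw [Matrix.smul_apply, Matrix.diagonal_mul, Matrix.mul_diagonal]
  simp only [uopInv, Matrix.of_apply]
  split_ifs with h
  · subst h
    rw [Function.update_self, qpow_val_add_one hqp hp1, smul_eq_mul]; ring
  · simp

include hqp hp1 hq0 hv in
lemma vopInv_mul_uop : vopInv p N q v n * uop p N u n = q • (uop p N u n * vopInv p N q v n) := by
  ext f g
  simp only [vop, vopInv]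
  rw [Matrix.smul_apply, Matrix.diagonal_mul, Matrix.mul_diagonal]
  simp only [uop, Matrix.of_apply]
  split_ifs with h
  · subst h
    rw [Function.update_self, smul_eq_mul]
    have h1 := qpow_val_sub_one hqp hp1 (q := q) (g n)
    have hvn : v n ≠ 0 := abs_ne_zero (hv n)
    have hq1 : q ^ ((g n - 1).val) ≠ 0 := pow_ne_zero _ hq0
    have hq2 : q ^ ((g n).val) ≠ 0 := pow_ne_zero _ hq0
    field_simp
    linear_combination (-(u n)) * h1
  · simp

include hqp hp1 hq0 hv hu in
lemma vopInv_mul_uopInv : vopInv p N q v n * uopInv p N u n = q⁻¹ • (uopInv p N u n * vopInv p N q v n) := by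
  ext f g
  simp only [vop, vopInv]
  rw [Matrix.smul_apply, Matrix.diagonal_mul, Matrix.mul_diagonal]
  simp only [uopInv, Matrix.of_apply]
  split_ifs with h
  · subst h
    rw [Function.update_self, qpow_val_add_one hqp hp1, smul_eq_mul]
    have hvn : v n ≠ 0 := abs_ne_zero (hv n)
    have hq1 : q ^ ((g n).val) ≠ 0 := pow_ne_zero _ hq0
    have hun : u n ≠ 0 := abs_ne_zero (hu n)
    field_simp
  · simp

end qpow

lemma update_shift_iff {f g : Idx p N} {a b : ZMod p} (hab : a + b = 0) :
    g = Function.update f n (f n + a) ↔ f = Function.update g n (g n + b) := by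
  have hba : b + a = 0 := by rw [add_comm]; exact hab
  constructor <;> intro h <;> subst h <;>
    simp only [Function.update_idem, Function.update_self] <;>
    rw [add_assoc] <;>
    first
      | rw [hab, add_zero, Function.update_eq_self]
      | rw [hba, add_zero, Function.update_eq_self]

lemma uop_conjTranspose (hu : ∀ n, ‖u n‖ = 1) :
    (uop p N u n)ᴴ = uopInv p N u n := by
  ext f g
  rw [Matrix.conjTranspose_apply]
  simp only [uop, uopInv, Matrix.of_apply]
  have h2 : g = Function.update f n (f n - 1) ↔ f = Function.update g n (g n + 1) := by
    simpa [sub_eq_add_neg] using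
      update_shift_iff (f := f) (g := g) (n := n) (a := (-1 : ZMod p)) (b := 1) (by ring)
  by_cases h : g = Function.update f n (f n - 1)
  · rw [if_pos h, if_pos (h2.mp h)]
    exact conj_eq_inv (hu n)
  · rw [if_neg h, if_neg (fun hh => h (h2.mpr hh)), star_zero]

lemma uopInv_conjTranspose (hu : ∀ n, ‖u n‖ = 1) :
    (uopInv p N u n)ᴴ = uop p N u n := by
  rw [← uop_conjTranspose hu, Matrix.conjTranspose_conjTranspose]

lemma vop_conjTranspose (hq : ‖q‖ = 1) (hv : ∀ n, ‖v n‖ = 1) :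
    (vop p N q v n)ᴴ = vopInv p N q v n := by
  ext f g
  rw [Matrix.conjTranspose_apply]
  simp only [vop, vopInv]
  by_cases h : f = g
  · subst h
    rw [Matrix.diagonal_apply_eq, Matrix.diagonal_apply_eq, star_mul', star_pow,
        star_eq_inv (hv n), star_eq_inv hq, inv_pow, ← mul_inv]
  · rw [Matrix.diagonal_apply_ne _ (fun hh => h hh.symm), Matrix.diagonal_apply_ne _ h,
        star_zero]

lemma vopInv_conjTranspose (hq : ‖q‖ = 1) (hv : ∀ n, ‖v n‖ = 1) :
    (vopInv p N q v n)ᴴ = vop p N q v n := by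
  rw [← vop_conjTranspose hq hv, Matrix.conjTranspose_conjTranspose]

/-! cross-site commutation -/

noncomputable def sh (p N : ℕ) (c : ℂ) (n : Fin N) (d : ZMod p) : Op p N :=
  Matrix.of fun f g => if f = Function.update g n (g n + d) then c else 0

lemma uop_eq_sh : uop p N u n = sh p N (u n) n (-1) := by
  ext f g; simp [uop, sh, sub_eq_add_neg]

lemma uopInv_eq_sh : uopInv p N u n = sh p N (u n)⁻¹ n 1 := rfl

lemma sh_mul_apply {c c' : ℂ} {d d' : ZMod p} (f g : Idx p N) :
    (sh p N c n d * sh p N c' m d') f g =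
      if f = Function.update (Function.update g m (g m + d')) n
          ((Function.update g m (g m + d')) n + d) then c * c' else 0 := by
  rw [Matrix.mul_apply]
  rw [Finset.sum_eq_single (Function.update g m (g m + d'))]
  · simp [sh]
  · intro b _ hb
    simp only [sh, Matrix.of_apply]
    rw [if_neg hb, mul_zero]
  · intro h; exact absurd (Finset.mem_univ _) h

lemma sh_comm {c c' : ℂ} {d d' : ZMod p} (hnm : n ≠ m) :
    Commute (sh p N c n d) (sh p N c' m d') := by
  unfold Commute SemiconjBy
  ext f g
  rw [sh_mul_apply, sh_mul_apply]
  rw [Function.update_of_ne hnm, Function.update_of_ne (Ne.symm hnm),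
      Function.update_comm (Ne.symm hnm), mul_comm]

lemma sh_comm_diag {c : ℂ} {d : ZMod p} (hnm : n ≠ m) (dd : ZMod p → ℂ) :
    Commute (sh p N c n d) (Matrix.diagonal (fun g : Idx p N => dd (g m))) := by
  unfold Commute SemiconjBy
  ext f g
  rw [Matrix.mul_diagonal, Matrix.diagonal_mul]
  simp only [sh, Matrix.of_apply]
  split_ifs with h
  · subst h
    rw [Function.update_of_ne (Ne.symm hnm), mul_comm]
  · simp

lemma diag_comm (d1 d2 : Idx p N → ℂ) :
    Commute (Matrix.diagonal d1) (Matrix.diagonal d2) := by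
  have h : (fun i : Idx p N => d1 i * d2 i) = fun i => d2 i * d1 i := by
    funext i; ring
  unfold Commute SemiconjBy
  rw [Matrix.diagonal_mul_diagonal, Matrix.diagonal_mul_diagonal, h]

lemma vop_eq_diag : vop p N q v m = Matrix.diagonal (fun g : Idx p N => (fun x : ZMod p => v m * q ^ x.val) (g m)) := rfl
lemma vopInv_eq_diag : vopInv p N q v m = Matrix.diagonal (fun g : Idx p N => (fun x : ZMod p => (v m * q ^ x.val)⁻¹) (g m)) := rfl

set_option maxHeartbeats 800000 in
lemma gen_comm (hnm : n ≠ m)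
    (X : Op p N) (hX : X = uop p N u n ∨ X = uopInv p N u n ∨ X = vop p N q v n ∨ X = vopInv p N q v n)
    (Y : Op p N) (hY : Y = uop p N u m ∨ Y = uopInv p N u m ∨ Y = vop p N q v m ∨ Y = vopInv p N q v m) :
    Commute X Y := by
  rcases hX with h | h | h | h <;> rcases hY with h' | h' | h' | h' <;> subst h <;> subst h'
  · rw [uop_eq_sh (n := n), uop_eq_sh (n := m)]; exact sh_comm hnm
  · rw [uop_eq_sh, uopInv_eq_sh]; exact sh_comm hnm
  · rw [uop_eq_sh, vop_eq_diag]; exact sh_comm_diag hnm (fun x => v m * q ^ x.val)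
  · rw [uop_eq_sh, vopInv_eq_diag]; exact sh_comm_diag hnm (fun x => (v m * q ^ x.val)⁻¹)
  · rw [uopInv_eq_sh, uop_eq_sh]; exact sh_comm hnm
  · rw [uopInv_eq_sh (n := n), uopInv_eq_sh (n := m)]; exact sh_comm hnm
  · rw [uopInv_eq_sh, vop_eq_diag]; exact sh_comm_diag hnm (fun x => v m * q ^ x.val)
  · rw [uopInv_eq_sh, vopInv_eq_diag]; exact sh_comm_diag hnm (fun x => (v m * q ^ x.val)⁻¹)
  · rw [vop_eq_diag (m := n), uop_eq_sh]; exact (sh_comm_diag (m := n) (Ne.symm hnm) (fun x => v n * q ^ x.val)).symm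
  · rw [vop_eq_diag (m := n), uopInv_eq_sh]; exact (sh_comm_diag (m := n) (Ne.symm hnm) (fun x => v n * q ^ x.val)).symm
  · rw [vop_eq_diag (m := n), vop_eq_diag (m := m)]; exact diag_comm _ _
  · rw [vop_eq_diag (m := n), vopInv_eq_diag (m := m)]; exact diag_comm _ _
  · rw [vopInv_eq_diag (m := n), uop_eq_sh]; exact (sh_comm_diag (m := n) (Ne.symm hnm) (fun x => (v n * q ^ x.val)⁻¹)).symm
  · rw [vopInv_eq_diag (m := n), uopInv_eq_sh]; exact (sh_comm_diag (m := n) (Ne.symm hnm) (fun x => (v n * q ^ x.val)⁻¹)).symm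
  · rw [vopInv_eq_diag (m := n), vop_eq_diag (m := m)]; exact diag_comm _ _
  · rw [vopInv_eq_diag (m := n), vopInv_eq_diag (m := m)]; exact diag_comm _ _

end helpers

section laxlemmas

variable {p N : ℕ} [NeZero p] {q : ℂ} {κ ξ u v : Fin N → ℂ} {n m : Fin N} {lam lam' : ℂ}

lemma Lax00 : Lax p N q κ ξ u v n lam 0 0 =
    κ n • (uop p N u n *
      ((qh p q)⁻¹ • (κ n • vop p N q v n) + qh p q • ((κ n)⁻¹ • vopInv p N q v n))) := by
  simp [Lax]

lemma Lax01 : Lax p N q κ ξ u v n lam 0 1 =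
    (κ n / Complex.I) • ((lam / ξ n) • vop p N q v n - (lam / ξ n)⁻¹ • vopInv p N q v n) := by
  simp [Lax]

lemma Lax10 : Lax p N q κ ξ u v n lam 1 0 =
    (κ n / Complex.I) • ((lam / ξ n) • vopInv p N q v n - (lam / ξ n)⁻¹ • vop p N q v n) := by
  simp [Lax]

lemma Lax11 : Lax p N q κ ξ u v n lam 1 1 =
    κ n • (uopInv p N u n *
      (qh p q • ((κ n)⁻¹ • vop p N q v n) + (qh p q)⁻¹ • (κ n • vopInv p N q v n))) := by
  simp [Lax]

lemma commute_lax_entry (X : Op p N)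
    (h1 : Commute (uop p N u n) X) (h2 : Commute (uopInv p N u n) X)
    (h3 : Commute (vop p N q v n) X) (h4 : Commute (vopInv p N q v n) X)
    (i j : Fin 2) : Commute (Lax p N q κ ξ u v n lam i j) X := by
  fin_cases i <;> fin_cases j <;> simp only [Fin.zero_eta, Fin.mk_one]
  · rw [Lax00]
    exact ((h1.mul_left ((((h3.smul_left _).smul_left _)).add_left
      (((h4.smul_left _).smul_left _)))).smul_left _)
  · rw [Lax01]
    exact (((h3.smul_left _).sub_left ((h4.smul_left _))).smul_left _)
  · rw [Lax10]
    exact (((h4.smul_left _).sub_left ((h3.smul_left _))).smul_left _)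
  · rw [Lax11]
    exact ((h2.mul_left ((((h3.smul_left _).smul_left _)).add_left
      (((h4.smul_left _).smul_left _)))).smul_left _)

lemma lax_commute (hnm : n ≠ m) (i j a b : Fin 2) :
    Commute (Lax p N q κ ξ u v n lam i j) (Lax p N q κ ξ u v m lam' a b) := by
  apply commute_lax_entry <;>
  · refine (commute_lax_entry (q := q) (κ := κ) (ξ := ξ) (u := u) (v := v) (lam := lam') _
      ?_ ?_ ?_ ?_ a b).symm <;>
    · apply gen_comm (q := q) (u := u) (v := v) (Ne.symm hnm)
      · tauto
      · tauto

lemma prod_entry_commute (l : List (Fin N)) (X : Op p N)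
    (h : ∀ k ∈ l, ∀ i j : Fin 2, Commute X (Lax p N q κ ξ u v k lam i j)) (i j : Fin 2) :
    Commute X (((l.map fun k => Lax p N q κ ξ u v k lam).reverse.prod) i j) := by
  induction l generalizing i j with
  | nil =>
    simp only [List.map_nil, List.reverse_nil, List.prod_nil]
    rw [Matrix.one_apply]
    split_ifs
    · exact Commute.one_right X
    · exact Commute.zero_right X
  | cons k t ih =>
    simp only [List.map_cons, List.reverse_cons, List.prod_append, List.prod_cons,
      List.prod_nil, mul_one]
    rw [Matrix.mul_apply]
    refine Commute.sum_right _ _ _ (fun c _ => ?_)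
    exact Commute.mul_right (ih (fun k' hk' => h k' (List.mem_cons_of_mem _ hk')) i c)
      (h k List.mem_cons_self c j)

end laxlemmas

/-- The index swap on the 2-dimensional auxiliary space. -/
def sw : Fin 2 → Fin 2 := ![1, 0]

lemma sw_zero : sw 0 = 1 := rfl
lemma sw_one : sw 1 = 0 := rfl

section mainlemmas

variable {p N : ℕ} [NeZero p] {q : ℂ} {κ ξ u v : Fin N → ℂ} {n m : Fin N} {lam : ℂ} {ε : ℂ}

lemma qh_mul_self (hp : Odd p) (hqp : q ^ p = 1) : qh p q * qh p q = q := by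
  unfold qh
  rw [← pow_add]
  have h2 : (p + 1) / 2 + (p + 1) / 2 = p + 1 := by
    obtain ⟨k, hk⟩ := hp
    subst hk; omega
  rw [h2, pow_succ, hqp, one_mul]

lemma lax_conjTranspose (hp : Odd p) (hqp : q ^ p = 1) (hp1 : 1 < p)
    (habs : ‖q‖ = 1)
    (hu : ∀ n, ‖u n‖ = 1) (hv : ∀ n, ‖v n‖ = 1)
    (hκn : κ n ≠ 0) (hξn : ξ n ≠ 0)
    (hκ2 : (starRingEnd ℂ) (κ n) * (starRingEnd ℂ) (κ n) = κ n * κ n)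
    (hξ2 : (starRingEnd ℂ) (ξ n) * (starRingEnd ℂ) (ξ n) = ξ n * ξ n)
    (hεn : -(κ n * ξ n) / ((starRingEnd ℂ) (κ n) * (starRingEnd ℂ) (ξ n)) = ε)
    (hlam : lam ≠ 0) (i j : Fin 2) :
    (Lax p N q κ ξ u v n lam i j)ᴴ =
      Lax p N q κ ξ u v n (ε * (starRingEnd ℂ) lam) (sw i) (sw j) := by
  have hq0 : q ≠ 0 := abs_ne_zero habs
  have hh2 : qh p q * qh p q = q := qh_mul_self hp hqp
  have hh0 : qh p q ≠ 0 := fun h => hq0 (by rw [← hh2, h, mul_zero])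
  have hhc : (starRingEnd ℂ) (qh p q) = (qh p q)⁻¹ := by
    unfold qh
    rw [map_pow, conj_eq_inv habs, inv_pow]
  have hκc0 : (starRingEnd ℂ) (κ n) ≠ 0 := by
    simpa using hκn
  have hξc0 : (starRingEnd ℂ) (ξ n) ≠ 0 := by
    simpa using hξn
  have hε0 : ε ≠ 0 := by
    rw [← hεn]
    field_simp
    exact neg_ne_zero.mpr (div_ne_zero (mul_ne_zero hκn hξn) (mul_ne_zero hκc0 hξc0))
  have hlamc : (starRingEnd ℂ) lam ≠ 0 := by simpa using hlam
  have hεn' : -(κ n * ξ n) = ε * ((starRingEnd ℂ) (κ n) * (starRingEnd ℂ) (ξ n)) := by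
    rw [← hεn, div_mul_cancel₀]
    exact mul_ne_zero hκc0 hξc0
  have key : ε * κ n * (starRingEnd ℂ) (ξ n) = -((starRingEnd ℂ) (κ n)) * ξ n := by
    apply mul_left_cancel₀ (mul_ne_zero hκc0 hξn)
    linear_combination (-(κ n * ξ n)) * hεn' + (ξ n * ξ n) * hκ2
  fin_cases i <;> fin_cases j <;>
    simp only [Fin.zero_eta, Fin.mk_one, sw_zero, sw_one]
  · rw [Lax00, Lax11]
    simp only [Matrix.conjTranspose_smul, Matrix.conjTranspose_mul, Matrix.conjTranspose_add,
      uop_conjTranspose hu, uopInv_conjTranspose hu, vop_conjTranspose habs hv,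
      vopInv_conjTranspose habs hv, Matrix.add_mul, Matrix.smul_mul, Matrix.mul_add,
      Matrix.mul_smul, vopInv_mul_uopInv hqp hp1 hq0 hv hu, vop_mul_uopInv hqp hp1 hq0,
      smul_smul, smul_add, Complex.star_def, map_inv₀]
    rw [add_comm]
    congr 1 <;> congr 1
    · rw [_root_.map_mul, _root_.map_mul, map_inv₀, hhc]
      field_simp
      linear_combination (-1 : ℂ) * hh2
    · rw [_root_.map_mul, _root_.map_mul, map_inv₀, hhc, inv_inv]
      field_simp
      linear_combination (qh p q * qh p q) * hκ2 + (κ n * κ n) * hh2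
  · rw [Lax01, Lax10]
    simp only [Matrix.conjTranspose_smul, Matrix.conjTranspose_sub,
      vop_conjTranspose habs hv, vopInv_conjTranspose habs hv,
      smul_sub, smul_smul, Complex.star_def, map_inv₀, map_div₀]
    congr 1 <;> congr 1
    · rw [_root_.map_mul, map_div₀, map_div₀, Complex.conj_I]
      field_simp
      linear_combination (-1 : ℂ) * key
    · rw [_root_.map_mul, map_inv₀, map_div₀, map_div₀, Complex.conj_I]
      field_simp
      linear_combination hεn'
  · rw [Lax10, Lax01]
    simp only [Matrix.conjTranspose_smul, Matrix.conjTranspose_sub,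
      vop_conjTranspose habs hv, vopInv_conjTranspose habs hv,
      smul_sub, smul_smul, Complex.star_def, map_inv₀, map_div₀]
    congr 1 <;> congr 1
    · rw [_root_.map_mul, map_div₀, map_div₀, Complex.conj_I]
      field_simp
      linear_combination (-1 : ℂ) * key
    · rw [_root_.map_mul, map_inv₀, map_div₀, map_div₀, Complex.conj_I]
      field_simp
      linear_combination hεn'
  · rw [Lax11, Lax00]
    simp only [Matrix.conjTranspose_smul, Matrix.conjTranspose_mul, Matrix.conjTranspose_add,
      uop_conjTranspose hu, uopInv_conjTranspose hu, vop_conjTranspose habs hv,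
      vopInv_conjTranspose habs hv, Matrix.add_mul, Matrix.smul_mul, Matrix.mul_add,
      Matrix.mul_smul, vopInv_mul_uop hqp hp1 hq0 hv, vop_mul_uop hqp hp1 hq0,
      smul_smul, smul_add, Complex.star_def, map_inv₀]
    rw [add_comm]
    congr 1 <;> congr 1
    · rw [_root_.map_mul, _root_.map_mul, map_inv₀, hhc]
      field_simp
      linear_combination (qh p q * qh p q) * hκ2 + (κ n * κ n) * hh2
    · rw [_root_.map_mul, _root_.map_mul, map_inv₀, hhc]
      field_simp
      linear_combination (-1 : ℂ) * hh2

lemma lax_neg (i j : Fin 2) :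
    Lax p N q κ ξ u v n (-lam) i j =
      (if i = j then (1 : ℂ) else -1) • Lax p N q κ ξ u v n lam i j := by
  fin_cases i <;> fin_cases j <;>
    simp only [Fin.zero_eta, Fin.mk_one]
  · simp only [if_true, one_smul]
    rw [Lax00, Lax00]
  · rw [if_neg (show ¬(0 : Fin 2) = 1 by decide), Lax01, Lax01, neg_div, inv_neg]
    module
  · rw [if_neg (show ¬(1 : Fin 2) = 0 by decide), Lax10, Lax10, neg_div, inv_neg]
    module
  · simp only [if_true, one_smul]
    rw [Lax11, Lax11]

lemma mon_list_neg (l : List (Fin N)) (a b : Fin 2) :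
    ((l.map fun k => Lax p N q κ ξ u v k (-lam)).reverse.prod) a b =
      (if a = b then (1 : ℂ) else -1) •
        ((l.map fun k => Lax p N q κ ξ u v k lam).reverse.prod) a b := by
  induction l generalizing a b with
  | nil =>
    by_cases hab : a = b
    · subst hab; simp
    · simp [Matrix.one_apply, hab]
  | cons k t ih =>
    simp only [List.map_cons, List.reverse_cons, List.prod_append, List.prod_cons,
      List.prod_nil, mul_one, Matrix.mul_apply, Fin.sum_univ_two]
    rw [ih a 0, ih a 1, lax_neg (lam := lam) 0 b, lax_neg (lam := lam) 1 b,
      Matrix.smul_mul, Matrix.smul_mul, Matrix.mul_smul, Matrix.mul_smul,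
      smul_smul, smul_smul, smul_add]
    fin_cases a <;> fin_cases b <;> norm_num

lemma mon_list_conjTranspose (hp : Odd p) (hqp : q ^ p = 1) (hp1 : 1 < p)
    (habs : ‖q‖ = 1)
    (hu : ∀ n, ‖u n‖ = 1) (hv : ∀ n, ‖v n‖ = 1)
    (hκ : ∀ n, κ n ≠ 0) (hξ : ∀ n, ξ n ≠ 0)
    (hκ2 : ∀ n, (starRingEnd ℂ) (κ n) * (starRingEnd ℂ) (κ n) = κ n * κ n)
    (hξ2 : ∀ n, (starRingEnd ℂ) (ξ n) * (starRingEnd ℂ) (ξ n) = ξ n * ξ n)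
    (hε : ∀ n, -(κ n * ξ n) / ((starRingEnd ℂ) (κ n) * (starRingEnd ℂ) (ξ n)) = ε)
    (hlam : lam ≠ 0) (l : List (Fin N)) (hl : l.Nodup) (a b : Fin 2) :
    ((((l.map fun k => Lax p N q κ ξ u v k lam).reverse.prod) a b))ᴴ =
      ((l.map fun k => Lax p N q κ ξ u v k (ε * (starRingEnd ℂ) lam)).reverse.prod)
        (sw a) (sw b) := by
  induction l generalizing a b with
  | nil =>
    by_cases hab : a = b
    · subst hab
      simp only [List.map_nil, List.reverse_nil, List.prod_nil, Matrix.one_apply_eq,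
        Matrix.conjTranspose_one]
    · have hab' : sw a ≠ sw b := by
        fin_cases a <;> fin_cases b <;> first | rfl | (exfalso; exact hab rfl) | decide
      simp only [List.map_nil, List.reverse_nil, List.prod_nil, Matrix.one_apply_ne hab,
        Matrix.one_apply_ne hab', Matrix.conjTranspose_zero]
  | cons k t ih =>
    have hk : k ∉ t := (List.nodup_cons.mp hl).1
    have ht : t.Nodup := (List.nodup_cons.mp hl).2
    simp only [List.map_cons, List.reverse_cons, List.prod_append, List.prod_cons,
      List.prod_nil, mul_one, Matrix.mul_apply, Fin.sum_univ_two]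
    rw [Matrix.conjTranspose_add, Matrix.conjTranspose_mul, Matrix.conjTranspose_mul,
      ih ht a 0, ih ht a 1,
      lax_conjTranspose hp hqp hp1 habs hu hv (hκ k) (hξ k) (hκ2 k) (hξ2 k) (hε k) hlam 0 b,
      lax_conjTranspose hp hqp hp1 habs hu hv (hκ k) (hξ k) (hκ2 k) (hξ2 k) (hε k) hlam 1 b,
      sw_zero, sw_one]
    have hc : ∀ i j a' b' : Fin 2,
        Lax p N q κ ξ u v k (ε * (starRingEnd ℂ) lam) i j *
          ((t.map fun k' => Lax p N q κ ξ u v k' (ε * (starRingEnd ℂ) lam)).reverse.prod) a' b' =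
        ((t.map fun k' => Lax p N q κ ξ u v k' (ε * (starRingEnd ℂ) lam)).reverse.prod) a' b' *
          Lax p N q κ ξ u v k (ε * (starRingEnd ℂ) lam) i j := by
      intro i j a' b'
      exact (prod_entry_commute t _ (fun k' hk' i' j' =>
        lax_commute (fun hkk => hk (by rw [hkk]; exact hk')) i j i' j') a' b').eq
    rw [hc, hc, add_comm]

end mainlemmas

/-- Under the reality conditions on `κ_n²`, `ξ_n²` and uniformity of
`ε = -(κ_nξ_n)/(κ_n^*ξ_n^*)`, the conjugate transposes of the monodromy entries satisfy
`A(λ)† = D(λ^*)`, `B(λ)† = C(ελ^*)`, `C(λ)† = B(ελ^*)`, `D(λ)† = A(λ^*)`; in particular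
`T(λ)` is self-adjoint for nonzero real `λ`. -/
theorem statement3 (p N : ℕ) [NeZero p] (hp : Odd p) (hp1 : 1 < p)
    (q : ℂ) (hq : IsPrimitiveRoot q p)
    (κ ξ u v : Fin N → ℂ) (hκ : ∀ n, κ n ≠ 0) (hξ : ∀ n, ξ n ≠ 0)
    (hu : ∀ n, ‖u n‖ = 1) (hv : ∀ n, ‖v n‖ = 1)
    (hN : 0 < N) (ε : ℂ)
    (hκR : ∀ n, (starRingEnd ℂ) (κ n ^ 2) = κ n ^ 2)
    (hξR : ∀ n, (starRingEnd ℂ) (ξ n ^ 2) = ξ n ^ 2)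
    (hε : ∀ n, -(κ n * ξ n) / ((starRingEnd ℂ) (κ n) * (starRingEnd ℂ) (ξ n)) = ε) :
    (∀ lam : ℂ, lam ≠ 0 →
      (Amat p N q κ ξ u v lam)ᴴ = Dmat p N q κ ξ u v ((starRingEnd ℂ) lam) ∧
      (Bmat p N q κ ξ u v lam)ᴴ = Cmat p N q κ ξ u v (ε * (starRingEnd ℂ) lam) ∧
      (Cmat p N q κ ξ u v lam)ᴴ = Bmat p N q κ ξ u v (ε * (starRingEnd ℂ) lam) ∧
      (Dmat p N q κ ξ u v lam)ᴴ = Amat p N q κ ξ u v ((starRingEnd ℂ) lam)) ∧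
    (∀ r : ℝ, (r : ℂ) ≠ 0 →
      (Tmat p N q κ ξ u v (r : ℂ))ᴴ = Tmat p N q κ ξ u v (r : ℂ)) := by
  have hqp : q ^ p = 1 := hq.pow_eq_one
  have habs : ‖q‖ = 1 := abs_eq_one_of_pow (by omega) hqp
  have hκ2 : ∀ n, (starRingEnd ℂ) (κ n) * (starRingEnd ℂ) (κ n) = κ n * κ n := by
    intro n
    have h := hκR n
    rw [map_pow] at h
    linear_combination h
  have hξ2 : ∀ n, (starRingEnd ℂ) (ξ n) * (starRingEnd ℂ) (ξ n) = ξ n * ξ n := by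
    intro n
    have h := hξR n
    rw [map_pow] at h
    linear_combination h
  have hee : ε = 1 ∨ ε = -1 := by
    set n0 : Fin N := ⟨0, hN⟩
    have h0 := hε n0
    have hκn : κ n0 ≠ 0 := hκ n0
    have hξn : ξ n0 ≠ 0 := hξ n0
    have hκc : (starRingEnd ℂ) (κ n0) ≠ 0 := by simpa using hκn
    have hξc : (starRingEnd ℂ) (ξ n0) ≠ 0 := by simpa using hξn
    have hmul : ε * ε = 1 := by
      rw [← h0]
      field_simp
      linear_combination (-(ξ n0 * ξ n0)) * hκ2 n0 + (-((starRingEnd ℂ) (κ n0) * (starRingEnd ℂ) (κ n0))) * hξ2 n0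
    exact mul_self_eq_one_iff.mp hmul
  have diagfix : ∀ (mu : ℂ) (c : Fin 2),
      (((List.finRange N).map fun n => Lax p N q κ ξ u v n (ε * mu)).reverse.prod) c c =
      (((List.finRange N).map fun n => Lax p N q κ ξ u v n mu).reverse.prod) c c := by
    intro mu c
    rcases hee with h1 | h1
    · rw [h1, one_mul]
    · rw [h1, show ((-1 : ℂ) * mu) = -mu by ring]
      rw [mon_list_neg (lam := mu) (List.finRange N) c c, if_pos rfl, one_smul]
  have part1 : ∀ lam : ℂ, lam ≠ 0 →
      (Amat p N q κ ξ u v lam)ᴴ = Dmat p N q κ ξ u v ((starRingEnd ℂ) lam) ∧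
      (Bmat p N q κ ξ u v lam)ᴴ = Cmat p N q κ ξ u v (ε * (starRingEnd ℂ) lam) ∧
      (Cmat p N q κ ξ u v lam)ᴴ = Bmat p N q κ ξ u v (ε * (starRingEnd ℂ) lam) ∧
      (Dmat p N q κ ξ u v lam)ᴴ = Amat p N q κ ξ u v ((starRingEnd ℂ) lam) := by
    intro lam hlam
    have main := fun a b => mon_list_conjTranspose (κ := κ) (ξ := ξ) (u := u) (v := v)
      hp hqp hp1 habs hu hv hκ hξ hκ2 hξ2 hε hlam (List.finRange N) (List.nodup_finRange N) a b
    refine ⟨?_, ?_, ?_, ?_⟩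
    · have h1 := main 0 0
      rw [sw_zero] at h1
      exact h1.trans (diagfix ((starRingEnd ℂ) lam) 1)
    · have h1 := main 0 1
      rw [sw_zero, sw_one] at h1
      exact h1
    · have h1 := main 1 0
      rw [sw_zero, sw_one] at h1
      exact h1
    · have h1 := main 1 1
      rw [sw_one] at h1
      exact h1.trans (diagfix ((starRingEnd ℂ) lam) 0)
  refine ⟨part1, ?_⟩
  intro r hr
  obtain ⟨hA, hB, hC, hD⟩ := part1 (r : ℂ) hr
  rw [Complex.conj_ofReal] at hA hD
  show (Amat p N q κ ξ u v (r : ℂ) + Dmat p N q κ ξ u v (r : ℂ))ᴴ = _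
  rw [Matrix.conjTranspose_add, hA, hD]
  show Dmat p N q κ ξ u v (r : ℂ) + Amat p N q κ ξ u v (r : ℂ) =
    Amat p N q κ ξ u v (r : ℂ) + Dmat p N q κ ξ u v (r : ℂ)
  exact add_comm _ _


end SG
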